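/- Let (s_i)_{i=1}^m be a non-increasing sequence of positive reals and (a_i)_{i=1}^m positive reals. Then the unique minimizer (λ_i*)_{i=1}^m of ∑_{i=1}^m s_i/λ_i over positive sequences satisfying ∑_{i=1}^j a_i ≤ ∑_{i=1}^j λ_i for j < m and ∑_{i=1}^m a_i = ∑_{i=1}^m λ_i is itself non-increasing. -/

import Mathlib

open Finset

set_option maxHeartbeats 1000000

lemma stmt2_aux (sx sy x y : ℝ) (hsx : 0 < sx) (hsy : 0 < sy) (hsyx : sy ≤ sx)
    (hx : 0 < x) (hxy : x < y) :
    0 < (sx / x - sx / ((x + y) / 2)) + (sy / y - sy / ((x + y) / 2)) := by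
  have hy : 0 < y := hx.trans hxy
  have hkey : sy / y < sx / x := by
    have h1 : sy / y < sy / x := div_lt_div_of_pos_left hsy hx hxy
    have h2 : sy / x ≤ sx / x := by gcongr
    linarith
  have halg : (sx / x - sx / ((x + y) / 2)) + (sy / y - sy / ((x + y) / 2)) =
      (y - x) / (x + y) * (sx / x - sy / y) := by
    field_simp
    ring
  rw [halg]
  apply mul_pos
  · apply div_pos <;> linarith
  · linarith

/-- If `s` is non-increasing, the (unique) optimal solution of the primal problem
is itself non-increasing. -/
theorem stmt2 (m : ℕ) (hm : 0 < m) (s a : Fin m → ℝ)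
    (hs : ∀ i, 0 < s i) (hsmono : Antitone s) (ha : ∀ i, 0 < a i)
    (lam : Fin m → ℝ)
    (hfeas : (∀ i, 0 < lam i) ∧
      (∀ j : ℕ, j < m →
        ∑ i ∈ univ.filter (fun i : Fin m => (i : ℕ) < j), a i ≤
          ∑ i ∈ univ.filter (fun i : Fin m => (i : ℕ) < j), lam i) ∧
      ∑ i, a i = ∑ i, lam i)
    (hopt : ∀ mu : Fin m → ℝ,
      ((∀ i, 0 < mu i) ∧
        (∀ j : ℕ, j < m →
          ∑ i ∈ univ.filter (fun i : Fin m => (i : ℕ) < j), a i ≤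
            ∑ i ∈ univ.filter (fun i : Fin m => (i : ℕ) < j), mu i) ∧
        ∑ i, a i = ∑ i, mu i) →
      ∑ i, s i / lam i ≤ ∑ i, s i / mu i) :
    Antitone lam := by
  obtain ⟨n, rfl⟩ := Nat.exists_eq_succ_of_ne_zero hm.ne'
  rw [Fin.antitone_iff_succ_le]
  intro k
  by_contra hcon
  push_neg at hcon
  obtain ⟨hpos, hpre, htot⟩ := hfeas
  set i0 : Fin (n + 1) := k.castSucc with hi0
  set i1 : Fin (n + 1) := k.succ with hi1
  have hlt01 : i0 < i1 := Fin.castSucc_lt_succ (i := k)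
  have hne : i1 ≠ i0 := hlt01.ne'
  set x : ℝ := lam i0 with hx
  set y : ℝ := lam i1 with hy
  have hxy : x < y := hcon
  have hx0 : 0 < x := hpos i0
  have hy0 : 0 < y := hpos i1
  set c : ℝ := (x + y) / 2 with hc
  have hc0 : 0 < c := by positivity
  have hxc : x < c := by
    rw [hc]; linarith
  set mu : Fin (n + 1) → ℝ := fun i => if i = i0 then c else if i = i1 then c else lam i
    with hmu
  have hmu0 : mu i0 = c := by simp [hmu]
  have hmu1 : mu i1 = c := by simp [hmu, hne]
  have hmupos : ∀ i, 0 < mu i := by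
    intro i
    simp only [hmu]
    split_ifs <;> first | exact hc0 | exact hpos i
  have hdiff : ∀ i, mu i - lam i =
      (if i = i0 then c - x else 0) + (if i = i1 then c - y else 0) := by
    intro i
    simp only [hmu]
    split_ifs with h1 h2 h3 <;> simp_all <;> ring
  -- sums over prefix sets
  have hsumdiff : ∀ F : Finset (Fin (n + 1)),
      ∑ i ∈ F, mu i - ∑ i ∈ F, lam i =
        (if i0 ∈ F then c - x else 0) + (if i1 ∈ F then c - y else 0) := by
    intro F
    rw [← Finset.sum_sub_distrib]
    calc ∑ i ∈ F, (mu i - lam i)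
        = ∑ i ∈ F, ((if i = i0 then c - x else 0) + (if i = i1 then c - y else 0)) := by
          exact Finset.sum_congr rfl fun i _ => hdiff i
      _ = (if i0 ∈ F then c - x else 0) + (if i1 ∈ F then c - y else 0) := by
          rw [Finset.sum_add_distrib, Finset.sum_ite_eq', Finset.sum_ite_eq']
  have hvals : (i0 : ℕ) = (k : ℕ) ∧ (i1 : ℕ) = (k : ℕ) + 1 := ⟨rfl, rfl⟩
  have hfeasmu : (∀ i, 0 < mu i) ∧
      (∀ j : ℕ, j < n + 1 →
        ∑ i ∈ univ.filter (fun i : Fin (n + 1) => (i : ℕ) < j), a i ≤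
          ∑ i ∈ univ.filter (fun i : Fin (n + 1) => (i : ℕ) < j), mu i) ∧
      ∑ i, a i = ∑ i, mu i := by
    refine ⟨hmupos, ?_, ?_⟩
    · intro j hj
      refine le_trans (hpre j hj) ?_
      have h := hsumdiff (univ.filter (fun i : Fin (n + 1) => (i : ℕ) < j))
      have hm0 : i0 ∈ univ.filter (fun i : Fin (n + 1) => (i : ℕ) < j) ↔ (k : ℕ) < j := by
        simp [hvals.1]
      have hm1 : i1 ∈ univ.filter (fun i : Fin (n + 1) => (i : ℕ) < j) ↔ (k : ℕ) + 1 < j := by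
        simp [hvals.2]
      by_cases h1 : (k : ℕ) + 1 < j
      · have h0 : (k : ℕ) < j := by omega
        rw [if_pos (hm0.mpr h0), if_pos (hm1.mpr h1)] at h
        linarith
      · by_cases h0 : (k : ℕ) < j
        · rw [if_pos (hm0.mpr h0), if_neg (fun hh => h1 (hm1.mp hh))] at h
          linarith
        · rw [if_neg (fun hh => h0 (hm0.mp hh)), if_neg (fun hh => h1 (hm1.mp hh))] at h
          linarith
    · have h := hsumdiff univ
      simp only [Finset.mem_univ, if_true] at h
      linarith [htot]
  have hle := hopt mu hfeasmu
  -- now show the objective strictly decreased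
  have hobjdiff : ∑ i, s i / lam i - ∑ i, s i / mu i =
      (s i0 / x - s i0 / c) + (s i1 / y - s i1 / c) := by
    rw [← Finset.sum_sub_distrib]
    calc ∑ i, (s i / lam i - s i / mu i)
        = ∑ i, ((if i = i0 then s i0 / x - s i0 / c else 0) +
            (if i = i1 then s i1 / y - s i1 / c else 0)) := by
          refine Finset.sum_congr rfl fun i _ => ?_
          by_cases h1 : i = i0
          · subst h1
            rw [hmu0, if_pos rfl, if_neg hlt01.ne, ← hx]
            ring
          · by_cases h2 : i = i1
            · subst h2
              rw [hmu1, if_neg hne, if_pos rfl, ← hy]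
              ring
            · have hmi : mu i = lam i := by simp [hmu, h1, h2]
              rw [hmi, if_neg h1, if_neg h2]
              ring
      _ = (s i0 / x - s i0 / c) + (s i1 / y - s i1 / c) := by
          rw [Finset.sum_add_distrib, Finset.sum_ite_eq', Finset.sum_ite_eq']
          simp
  have hposobj : 0 < ∑ i, s i / lam i - ∑ i, s i / mu i := by
    rw [hobjdiff, hc]
    exact stmt2_aux (s i0) (s i1) x y (hs i0) (hs i1) (hsmono hlt01.le) hx0 hxy
  linarith
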